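/- In the setting of Problem 1, choose μ > 0, α̲ > 0 and β ≥ 0 satisfying μ(σ − L_{∇g}α̲) > β(μ² + 1), define M_1 = (σ − ᾱL_{∇g})/(2ᾱ) − μβ/(2α̲) and M_2 = β/(2μα̲), and choose ᾱ > α̲ such that M_1 > M_2. Assume f + g is bounded from below, and let (x_n)_{n∈ℕ} be a sequence generated by Algorithm 1. Then ∑_{n≥1} ‖x_n − x_{n−1}‖² < +∞. -/

import Mathlib

open Filter Topology RealInnerProductSpace

noncomputable section

variable {E : Type*} [NormedAddCommGroup E] [InnerProductSpace ℝ E]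

/-- The Fréchet (viscosity) subdifferential of an extended-real-valued function `h` at `x`:
`v` belongs to it iff `x ∈ dom h` and
`liminf_{y → x} (h y - h x - ⟪v, y - x⟫)/‖y - x‖ ≥ 0`, expressed equivalently by the
epsilon-characterization of the liminf. -/
def frechetSubdiff (h : E → EReal) (x : E) : Set E :=
  {v | h x ≠ ⊤ ∧ ∀ ε : ℝ, 0 < ε →
    ∀ᶠ y in 𝓝 x, (((h x).toReal + ⟪v, y - x⟫ - ε * ‖y - x‖ : ℝ) : EReal) ≤ h y}

/-- The limiting (Mordukhovich) subdifferential of `h` at `x`. -/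
def limitingSubdiff (h : E → EReal) (x : E) : Set E :=
  {v | h x ≠ ⊤ ∧ ∃ xk vk : ℕ → E,
    Tendsto xk atTop (𝓝 x) ∧
    Tendsto (fun k => h (xk k)) atTop (𝓝 (h x)) ∧
    (∀ k, vk k ∈ frechetSubdiff h (xk k)) ∧
    Tendsto vk atTop (𝓝 v)}

section AuxLemmas
variable [CompleteSpace E]

open Set in

lemma lineDeriv' {F : E → ℝ} (hF : Differentiable ℝ F) (v w : E) (t : ℝ) :
    HasDerivAt (fun s : ℝ => F (v + s • w)) ⟪gradient F (v + t • w), w⟫ t := by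
  have hγ : HasDerivAt (fun s : ℝ => v + s • w) w t := by
    simpa using ((hasDerivAt_id t).smul_const w).const_add v
  have hf := (hF (v + t • w)).hasGradientAt.hasFDerivAt
  have := hf.comp_hasDerivAt t hγ
  exact this.congr_deriv InnerProductSpace.toDual_apply_apply

lemma strong_lower {F : E → ℝ} {σ : ℝ}
    (hconv : ConvexOn ℝ Set.univ fun z => F z - σ / 2 * ‖z‖ ^ 2)
    (hdiff : Differentiable ℝ F) (u v : E) :
    σ / 2 * ‖u - v‖ ^ 2 ≤ F u - F v - ⟪gradient F v, u - v⟫ := by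
  set w := u - v with hw
  set φ : ℝ → ℝ := fun t => F (v + t • w) - σ / 2 * ‖v + t • w‖ ^ 2 with hφ
  have hφconv : ConvexOn ℝ Set.univ φ := by
    have h1 := hconv.comp_affineMap (AffineMap.lineMap v u)
    rw [Set.preimage_univ] at h1
    have e : φ = (fun z => F z - σ / 2 * ‖z‖ ^ 2) ∘ ⇑(AffineMap.lineMap (k := ℝ) v u) := by
      funext t
      simp only [Function.comp_apply, AffineMap.lineMap_apply_module, hφ, hw]
      rw [show v + t • (u - v) = (1 - t) • v + t • u by
        rw [smul_sub, sub_smul, one_smul]; abel]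
    rw [e]; exact h1
  have hnorm : ∀ t : ℝ, ‖v + t • w‖ ^ 2 = ‖v‖ ^ 2 + 2 * t * ⟪v, w⟫ + t ^ 2 * ‖w‖ ^ 2 := by
    intro t
    rw [norm_add_sq_real, real_inner_smul_right, norm_smul]
    simp [Real.norm_eq_abs, mul_pow, sq_abs]
    ring
  have hφd : ∀ t : ℝ, HasDerivAt φ
      (⟪gradient F (v + t • w), w⟫ - σ / 2 * (2 * ⟪v, w⟫ + 2 * t * ‖w‖ ^ 2)) t := by
    intro t
    have h1 := lineDeriv' hdiff v w t
    have h2 : HasDerivAt (fun s : ℝ => σ / 2 * ‖v + s • w‖ ^ 2)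
        (σ / 2 * (2 * ⟪v, w⟫ + 2 * t * ‖w‖ ^ 2)) t := by
      have hq : HasDerivAt (fun s : ℝ => ‖v‖ ^ 2 + 2 * s * ⟪v, w⟫ + s ^ 2 * ‖w‖ ^ 2)
          (2 * ⟪v, w⟫ + 2 * t * ‖w‖ ^ 2) t := by
        have ha : HasDerivAt (fun s : ℝ => 2 * s * ⟪v, w⟫) (2 * ⟪v, w⟫) t := by
          simpa using ((hasDerivAt_id t).const_mul 2).mul_const ⟪v, w⟫
        have hb : HasDerivAt (fun s : ℝ => s ^ 2 * ‖w‖ ^ 2) (2 * t * ‖w‖ ^ 2) t := by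
          simpa [pow_one] using (hasDerivAt_pow 2 t).mul_const (‖w‖ ^ 2)
        exact (((hasDerivAt_const t (‖v‖ ^ 2)).add ha).add hb).congr_deriv (by ring)
      have := hq.const_mul (σ / 2)
      simpa [hnorm] using this
    exact h1.sub h2
  have hslope := hφconv.le_slope_of_hasDerivAt (Set.mem_univ (0:ℝ)) (Set.mem_univ (1:ℝ))
    one_pos (hφd 0)
  rw [slope_def_field] at hslope
  have e0 : φ 0 = F v - σ / 2 * ‖v‖ ^ 2 := by simp [hφ]
  have e1 : φ 1 = F u - σ / 2 * ‖u‖ ^ 2 := by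
    simp only [hφ, one_smul, hw]
    rw [add_sub_cancel]
  have einner : ⟪gradient F (v + (0:ℝ) • w), w⟫ = ⟪gradient F v, w⟫ := by simp
  rw [e0, e1, einner] at hslope
  have hn : ‖w‖ ^ 2 = ‖u‖ ^ 2 - 2 * ⟪u, v⟫ + ‖v‖ ^ 2 := by
    rw [hw, norm_sub_sq_real]
  have hvw : ⟪v, w⟫ = ⟪v, u⟫ - ‖v‖ ^ 2 := by
    rw [hw, inner_sub_right, real_inner_self_eq_norm_sq]
  have hn2 : σ / 2 * ‖w‖ ^ 2 = σ / 2 * (‖u‖ ^ 2 - 2 * ⟪v, u⟫ + ‖v‖ ^ 2) := by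
    rw [hn, ← real_inner_comm u v]
  have hvwσ : σ / 2 * (2 * ⟪v, w⟫ + 2 * 0 * ‖w‖ ^ 2) = σ * ⟪v, u⟫ - σ * ‖v‖ ^ 2 := by
    rw [hvw]; ring
  linarith [hslope, hn2, hvwσ]

lemma descent_lemma {g : E → ℝ} {Lg : ℝ} (hLg : 0 ≤ Lg)
    (hdiff : Differentiable ℝ g)
    (hlip : ∀ z w, ‖gradient g z - gradient g w‖ ≤ Lg * ‖z - w‖)
    (u v : E) : g u ≤ g v + ⟪gradient g v, u - v⟫ + Lg / 2 * ‖u - v‖ ^ 2 := by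
  set w := u - v with hw
  set χ : ℝ → ℝ := fun t => g (v + t • w) - t * ⟪gradient g v, w⟫ - Lg / 2 * t ^ 2 * ‖w‖ ^ 2
    with hχ
  have hχd : ∀ t : ℝ, HasDerivAt χ
      (⟪gradient g (v + t • w), w⟫ - ⟪gradient g v, w⟫ - Lg / 2 * (2 * t) * ‖w‖ ^ 2) t := by
    intro t
    have h1 := lineDeriv' hdiff v w t
    have h2 : HasDerivAt (fun s : ℝ => s * ⟪gradient g v, w⟫) ⟪gradient g v, w⟫ t := by
      simpa using (hasDerivAt_id t).mul_const ⟪gradient g v, w⟫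
    have h3 : HasDerivAt (fun s : ℝ => Lg / 2 * s ^ 2 * ‖w‖ ^ 2) (Lg / 2 * (2 * t) * ‖w‖ ^ 2) t := by
      have := ((hasDerivAt_pow 2 t).const_mul (Lg / 2)).mul_const (‖w‖ ^ 2)
      simpa [pow_one] using this
    exact (h1.sub h2).sub h3
  have hderiv_nonpos : ∀ t ∈ interior (Set.Icc (0:ℝ) 1), deriv χ t ≤ 0 := by
    intro t ht
    rw [interior_Icc] at ht
    rw [(hχd t).deriv]
    have hsub : ⟪gradient g (v + t • w), w⟫ - ⟪gradient g v, w⟫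
        = ⟪gradient g (v + t • w) - gradient g v, w⟫ := (inner_sub_left _ _ _).symm
    have hcs : ⟪gradient g (v + t • w) - gradient g v, w⟫
        ≤ ‖gradient g (v + t • w) - gradient g v‖ * ‖w‖ := real_inner_le_norm _ _
    have hl := hlip (v + t • w) v
    have he : v + t • w - v = t • w := by abel
    rw [he] at hl
    have hns : ‖t • w‖ = t * ‖w‖ := by
      rw [norm_smul, Real.norm_eq_abs, abs_of_pos ht.1]
    rw [hns] at hl
    have h4 : ‖gradient g (v + t • w) - gradient g v‖ * ‖w‖ ≤ Lg * (t * ‖w‖) * ‖w‖ :=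
      mul_le_mul_of_nonneg_right hl (norm_nonneg _)
    rw [hsub]
    nlinarith [hcs, h4]
  have hanti : AntitoneOn χ (Set.Icc (0:ℝ) 1) := by
    apply antitoneOn_of_deriv_nonpos (convex_Icc 0 1)
    · exact (fun t _ => ((hχd t).differentiableAt).continuousAt.continuousWithinAt)
    · intro t ht
      exact ((hχd t).differentiableAt).differentiableWithinAt
    · exact hderiv_nonpos
  have h01 := hanti (Set.mem_Icc.2 ⟨le_refl 0, zero_le_one⟩)
    (Set.mem_Icc.2 ⟨zero_le_one, le_refl 1⟩) zero_le_one
  have e0 : χ 0 = g v := by simp [hχ]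
  have e1 : χ 1 = g u - ⟪gradient g v, w⟫ - Lg / 2 * ‖w‖ ^ 2 := by
    simp only [hχ, one_smul, one_pow, one_mul, hw]
    rw [add_sub_cancel]
    ring
  rw [e0, e1] at h01
  linarith [h01]

end AuxLemmas

set_option maxHeartbeats 1000000 in
/-- Proposition 3.2(a): under the parameter conditions and boundedness below of `f + g`,
the squared increments of the iterates of Algorithm 1 are summable. -/
theorem stmt6
    (m : ℕ)
    (f : EuclideanSpace ℝ (Fin m) → EReal)
    -- `f` is proper (never `⊥`, somewhere finite), lower semicontinuous and bounded below
    (hfbot : ∀ z, f z ≠ ⊥) (hfproper : ∃ z, f z ≠ ⊤)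
    (hflsc : LowerSemicontinuous f)
    (hfbdd : ∃ cl : ℝ, ∀ z, (cl : EReal) ≤ f z)
    -- `g` is differentiable with `Lg`-Lipschitz gradient
    (g : EuclideanSpace ℝ (Fin m) → ℝ) (Lg : ℝ) (hLg : 0 ≤ Lg)
    (hgdiff : Differentiable ℝ g)
    (hglip : ∀ z w, ‖gradient g z - gradient g w‖ ≤ Lg * ‖z - w‖)
    -- `F` is `σ`-strongly convex and differentiable with `LF`-Lipschitz gradient
    (F : EuclideanSpace ℝ (Fin m) → ℝ) (σ LF : ℝ) (hσ : 0 < σ) (hLF : 0 < LF)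
    (hFconv : ConvexOn ℝ Set.univ fun z => F z - σ / 2 * ‖z‖ ^ 2)
    (hFdiff : Differentiable ℝ F)
    (hFlip : ∀ z w, ‖gradient F z - gradient F w‖ ≤ LF * ‖z - w‖)
    -- parameters of the algorithm
    (αlo αhi β : ℝ) (hαlo : 0 < αlo) (hαorder : αlo ≤ αhi) (hβ : 0 ≤ β)
    (α βs : ℕ → ℝ)
    (hα : ∀ n, 1 ≤ n → αlo ≤ α n ∧ α n ≤ αhi)
    (hβs : ∀ n, 1 ≤ n → 0 ≤ βs n ∧ βs n ≤ β)
    -- the sequence generated by Algorithm 1: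
    -- `x (n+1)` minimizes `u ↦ D_F(u, x n) + α n • ⟪u, ∇g(x n)⟫ + βs n • ⟪u, x (n-1) - x n⟫ + α n • f u`
    (x : ℕ → EuclideanSpace ℝ (Fin m))
    (halg : ∀ n, 1 ≤ n → ∀ u,
      ((F (x (n + 1)) - F (x n) - ⟪gradient F (x n), x (n + 1) - x n⟫
          + α n * ⟪x (n + 1), gradient g (x n)⟫
          + βs n * ⟪x (n + 1), x (n - 1) - x n⟫ : ℝ) : EReal)
        + (α n : EReal) * f (x (n + 1))
      ≤ ((F u - F (x n) - ⟪gradient F (x n), u - x n⟫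
          + α n * ⟪u, gradient g (x n)⟫
          + βs n * ⟪u, x (n - 1) - x n⟫ : ℝ) : EReal)
        + (α n : EReal) * f u)
    -- the parameters `μ, αlo, β` satisfy `μ(σ - Lg·αlo) > β(μ² + 1)` and `αhi` is chosen
    -- with `αlo < αhi` such that `M1 > M2`
    (μ : ℝ) (hμ : 0 < μ)
    (hcond : β * (μ ^ 2 + 1) < μ * (σ - Lg * αlo))
    (M1 M2 : ℝ)
    (hM1 : M1 = (σ - αhi * Lg) / (2 * αhi) - μ * β / (2 * αlo))
    (hM2 : M2 = β / (2 * μ * αlo))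
    (hαstrict : αlo < αhi) (hM : M2 < M1)

    -- `f + g` is bounded from below
    (hfgbdd : ∃ c : ℝ, ∀ z, (c : EReal) ≤ f z + ((g z : ℝ) : EReal))
    :
    Summable fun n => ‖x (n + 1) - x n‖ ^ 2 := by
  obtain ⟨z₀, hz₀⟩ := hfproper
  obtain ⟨c, hc⟩ := hfgbdd
  have hαhi : (0:ℝ) < αhi := hαlo.trans_le hαorder
  -- finiteness of f at x (k+1) for k ≥ 1
  have hfin : ∀ k : ℕ, 1 ≤ k → f (x (k + 1)) ≠ ⊤ := by
    intro k hk htop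
    have h := halg k hk z₀
    have hαk : 0 < α k := hαlo.trans_le (hα k hk).1
    have hz : f z₀ = (((f z₀).toReal : ℝ) : EReal) := (EReal.coe_toReal hz₀ (hfbot z₀)).symm
    rw [htop, EReal.coe_mul_top_of_pos hαk, EReal.coe_add_top, hz, ← EReal.coe_mul,
      ← EReal.coe_add] at h
    exact absurd h (not_le.mpr (EReal.coe_lt_top _))
  set fr : ℕ → ℝ := fun n => (f (x n)).toReal with hfr
  have hfeq : ∀ n : ℕ, 2 ≤ n → f (x n) = ((fr n : ℝ) : EReal) := by
    intro n hn
    obtain ⟨k, rfl⟩ : ∃ k, n = k + 1 := ⟨n - 1, by omega⟩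
    exact (EReal.coe_toReal (hfin k (by omega)) (hfbot _)).symm
  have hφlb : ∀ n : ℕ, 2 ≤ n → c ≤ fr n + g (x n) := by
    intro n hn
    have h := hc (x n)
    rw [hfeq n hn, ← EReal.coe_add] at h
    exact_mod_cast h
  have hM2nn : 0 ≤ M2 := by rw [hM2]; positivity
  have eM2 : M2 * (2 * μ * αlo) = β := by
    rw [hM2]; field_simp
  have eM1 : M1 * (2 * αhi * αlo) = αlo * (σ - αhi * Lg) - αhi * (μ * β) := by
    rw [hM1]; field_simp
  -- the key one-step inequality
  have hkey : ∀ k : ℕ,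
      fr (k+3) + g (x (k+3)) + M1 * ‖x (k+3) - x (k+2)‖ ^ 2
        ≤ fr (k+2) + g (x (k+2)) + M2 * ‖x (k+2) - x (k+1)‖ ^ 2 := by
    intro k
    have hk1 : 1 ≤ k + 2 := by omega
    have ha1 : αlo ≤ α (k+2) := (hα _ hk1).1
    have ha2 : α (k+2) ≤ αhi := (hα _ hk1).2
    have hb1 : 0 ≤ βs (k+2) := (hβs _ hk1).1
    have hb2 : βs (k+2) ≤ β := (hβs _ hk1).2
    have ha0 : 0 < α (k+2) := hαlo.trans_le ha1
    have h := halg (k+2) hk1 (x (k+2))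
    rw [hfeq (k+2+1) (by omega), hfeq (k+2) (by omega), ← EReal.coe_mul, ← EReal.coe_mul,
      ← EReal.coe_add, ← EReal.coe_add] at h
    have h' := EReal.coe_le_coe_iff.mp h
    have i1 : k + 2 + 1 = k + 3 := rfl
    have i2 : k + 2 - 1 = k + 1 := rfl
    simp only [i1, i2, sub_self, inner_zero_right] at h'
    have hsc := strong_lower hFconv hFdiff (x (k+3)) (x (k+2))
    have hde := descent_lemma hLg hgdiff hglip (x (k+3)) (x (k+2))
    have eG : ⟪x (k+3), gradient g (x (k+2))⟫ - ⟪x (k+2), gradient g (x (k+2))⟫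
        = ⟪x (k+3) - x (k+2), gradient g (x (k+2))⟫ := (inner_sub_left _ _ _).symm
    have eD : ⟪x (k+3), x (k+1) - x (k+2)⟫ - ⟪x (k+2), x (k+1) - x (k+2)⟫
        = ⟪x (k+3) - x (k+2), x (k+1) - x (k+2)⟫ := (inner_sub_left _ _ _).symm
    have ecomm : ⟪gradient g (x (k+2)), x (k+3) - x (k+2)⟫
        = ⟪x (k+3) - x (k+2), gradient g (x (k+2))⟫ := real_inner_comm _ _
    have hcs : -(‖x (k+3) - x (k+2)‖ * ‖x (k+2) - x (k+1)‖)
        ≤ ⟪x (k+3) - x (k+2), x (k+1) - x (k+2)⟫ := by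
      have h1 := real_inner_le_norm (x (k+3) - x (k+2)) (x (k+2) - x (k+1))
      have h2 : ⟪x (k+3) - x (k+2), x (k+1) - x (k+2)⟫
          = -⟪x (k+3) - x (k+2), x (k+2) - x (k+1)⟫ := by
        rw [← neg_sub (x (k+2)) (x (k+1)), inner_neg_right]
      linarith
    have H1 : α (k+2) * g (x (k+3)) ≤ α (k+2) * (g (x (k+2))
        + ⟪gradient g (x (k+2)), x (k+3) - x (k+2)⟫
        + Lg / 2 * ‖x (k+3) - x (k+2)‖ ^ 2) := mul_le_mul_of_nonneg_left hde ha0.le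
    have H2 : βs (k+2) * (-(‖x (k+3) - x (k+2)‖ * ‖x (k+2) - x (k+1)‖))
        ≤ βs (k+2) * ⟪x (k+3) - x (k+2), x (k+1) - x (k+2)⟫ :=
      mul_le_mul_of_nonneg_left hcs hb1
    have eG' : α (k+2) * ⟪x (k+3), gradient g (x (k+2))⟫
        - α (k+2) * ⟪x (k+2), gradient g (x (k+2))⟫
        = α (k+2) * ⟪x (k+3) - x (k+2), gradient g (x (k+2))⟫ := by
      linear_combination (α (k+2)) * eG
    have eD' : βs (k+2) * ⟪x (k+3), x (k+1) - x (k+2)⟫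
        - βs (k+2) * ⟪x (k+2), x (k+1) - x (k+2)⟫
        = βs (k+2) * ⟪x (k+3) - x (k+2), x (k+1) - x (k+2)⟫ := by
      linear_combination (βs (k+2)) * eD
    have ecomm' : α (k+2) * ⟪gradient g (x (k+2)), x (k+3) - x (k+2)⟫
        = α (k+2) * ⟪x (k+3) - x (k+2), gradient g (x (k+2))⟫ := by
      linear_combination (α (k+2)) * ecomm
    have key1 : α (k+2) * (fr (k+3) + g (x (k+3)) - fr (k+2) - g (x (k+2)))
        + σ / 2 * ‖x (k+3) - x (k+2)‖ ^ 2
        - α (k+2) * (Lg / 2) * ‖x (k+3) - x (k+2)‖ ^ 2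
        - βs (k+2) * (‖x (k+3) - x (k+2)‖ * ‖x (k+2) - x (k+1)‖) ≤ 0 := by
      linarith only [h', hsc, H1, H2, eG', eD', ecomm']
    have hAM : 2 * μ * (‖x (k+3) - x (k+2)‖ * ‖x (k+2) - x (k+1)‖)
        ≤ μ ^ 2 * ‖x (k+3) - x (k+2)‖ ^ 2 + ‖x (k+2) - x (k+1)‖ ^ 2 := by
      nlinarith [sq_nonneg (μ * ‖x (k+3) - x (k+2)‖ - ‖x (k+2) - x (k+1)‖)]
    have H3 := mul_le_mul_of_nonneg_left hAM hb1
    have H4 := mul_le_mul_of_nonneg_left key1 (by positivity : (0:ℝ) ≤ 2 * μ)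
    have key2 : 2 * μ * α (k+2) * (fr (k+3) + g (x (k+3)) - fr (k+2) - g (x (k+2)))
        + μ * σ * ‖x (k+3) - x (k+2)‖ ^ 2 - μ * α (k+2) * Lg * ‖x (k+3) - x (k+2)‖ ^ 2
        ≤ βs (k+2) * (μ ^ 2 * ‖x (k+3) - x (k+2)‖ ^ 2 + ‖x (k+2) - x (k+1)‖ ^ 2) := by
      linarith only [H4, H3]
    have hM1pos : 0 < M1 := lt_of_le_of_lt hM2nn hM
    have hq : βs (k+2) ≤ 2 * μ * α (k+2) * M2 := by
      have t₃ : 0 ≤ 2 * μ * M2 * (α (k+2) - αlo) :=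
        mul_nonneg (mul_nonneg (by linarith) hM2nn) (by linarith)
      linarith only [eM2, t₃, hb2]
    have eM1' : μ * α (k+2) * M1 * (2 * αhi * αlo)
        = μ * α (k+2) * (αlo * (σ - αhi * Lg) - αhi * (μ * β)) := by
      linear_combination (μ * α (k+2)) * eM1
    have t₁ : 0 ≤ μ * αlo * σ * (αhi - α (k+2)) :=
      mul_nonneg (mul_nonneg (mul_nonneg hμ.le hαlo.le) hσ.le) (by linarith)
    have tab : αlo * βs (k+2) ≤ α (k+2) * β :=
      mul_le_mul ha1 hb2 hb1 (by linarith)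
    have t₂ : 0 ≤ μ * μ * αhi * (α (k+2) * β - αlo * βs (k+2)) :=
      mul_nonneg (mul_nonneg (mul_nonneg hμ.le hμ.le) hαhi.le) (by linarith)
    have hp' : 0 ≤ (μ * σ - μ * α (k+2) * Lg - 2 * μ * α (k+2) * M1 - βs (k+2) * μ ^ 2)
        * (αhi * αlo) := by linarith only [eM1', t₁, t₂]
    have hp : 0 ≤ μ * σ - μ * α (k+2) * Lg - 2 * μ * α (k+2) * M1 - βs (k+2) * μ ^ 2 :=
      le_of_mul_le_mul_right (by linarith) (by positivity : (0:ℝ) < αhi * αlo)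
    have t₄ : 0 ≤ (μ * σ - μ * α (k+2) * Lg - 2 * μ * α (k+2) * M1 - βs (k+2) * μ ^ 2)
        * ‖x (k+3) - x (k+2)‖ ^ 2 := mul_nonneg hp (sq_nonneg _)
    have t₅ : βs (k+2) * ‖x (k+2) - x (k+1)‖ ^ 2
        ≤ 2 * μ * α (k+2) * M2 * ‖x (k+2) - x (k+1)‖ ^ 2 :=
      mul_le_mul_of_nonneg_right hq (sq_nonneg _)
    have h2μa : (0:ℝ) < 2 * μ * α (k+2) := by positivity
    have hfinal : 2 * μ * α (k+2) * (fr (k+3) + g (x (k+3)) + M1 * ‖x (k+3) - x (k+2)‖ ^ 2)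
        ≤ 2 * μ * α (k+2) * (fr (k+2) + g (x (k+2)) + M2 * ‖x (k+2) - x (k+1)‖ ^ 2) := by
      linarith only [key2, t₄, t₅]
    exact le_of_mul_le_mul_left hfinal h2μa
  -- telescoping
  have htel : ∀ N : ℕ, fr (N+2) + g (x (N+2)) + M2 * ‖x (N+2) - x (N+1)‖ ^ 2
      + (M1 - M2) * ∑ i ∈ Finset.range N, ‖x (i+3) - x (i+2)‖ ^ 2
      ≤ fr 2 + g (x 2) + M2 * ‖x 2 - x 1‖ ^ 2 := by
    intro N
    induction N with
    | zero => norm_num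
    | succ n ih =>
      rw [Finset.sum_range_succ]
      have hk := hkey n
      show fr (n+3) + g (x (n+3)) + M2 * ‖x (n+3) - x (n+2)‖ ^ 2
        + (M1 - M2) * (∑ i ∈ Finset.range n, ‖x (i+3) - x (i+2)‖ ^ 2
          + ‖x (n+3) - x (n+2)‖ ^ 2)
        ≤ fr 2 + g (x 2) + M2 * ‖x 2 - x 1‖ ^ 2
      linarith only [hk, ih]
  have hMgap : 0 < M1 - M2 := by linarith
  have hbound2 : ∀ N : ℕ, ∑ i ∈ Finset.range N, ‖x (i+3) - x (i+2)‖ ^ 2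
      ≤ (fr 2 + g (x 2) + M2 * ‖x 2 - x 1‖ ^ 2 - c) / (M1 - M2) := by
    intro N
    have h1 := htel N
    have h2 := hφlb (N+2) (by omega)
    have h3 : 0 ≤ M2 * ‖x (N+2) - x (N+1)‖ ^ 2 := by positivity
    rw [le_div_iff₀ hMgap]
    nlinarith [h1, h2, h3]
  apply summable_of_sum_range_le
    (c := ‖x 1 - x 0‖ ^ 2 + ‖x 2 - x 1‖ ^ 2
      + (fr 2 + g (x 2) + M2 * ‖x 2 - x 1‖ ^ 2 - c) / (M1 - M2))
    (fun n => by positivity)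
  intro n
  have hsub : ∑ i ∈ Finset.range n, ‖x (i+1) - x i‖ ^ 2
      ≤ ∑ i ∈ Finset.range (n+2), ‖x (i+1) - x i‖ ^ 2 :=
    Finset.sum_le_sum_of_subset_of_nonneg (Finset.range_subset_range.2 (by omega))
      (fun i _ _ => by positivity)
  have e : ∑ i ∈ Finset.range n, ‖x (i+1+1+1) - x (i+1+1)‖ ^ 2
      = ∑ i ∈ Finset.range n, ‖x (i+3) - x (i+2)‖ ^ 2 :=
    Finset.sum_congr rfl (fun i _ => rfl)
  have hsplit : ∑ i ∈ Finset.range (n+2), ‖x (i+1) - x i‖ ^ 2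
      = ‖x 1 - x 0‖ ^ 2 + ‖x 2 - x 1‖ ^ 2
        + ∑ i ∈ Finset.range n, ‖x (i+3) - x (i+2)‖ ^ 2 := by
    rw [Finset.sum_range_succ']
    rw [Finset.sum_range_succ']
    rw [e]
    norm_num
    ring
  calc ∑ i ∈ Finset.range n, ‖x (i+1) - x i‖ ^ 2
      ≤ ∑ i ∈ Finset.range (n+2), ‖x (i+1) - x i‖ ^ 2 := hsub
    _ = ‖x 1 - x 0‖ ^ 2 + ‖x 2 - x 1‖ ^ 2
        + ∑ i ∈ Finset.range n, ‖x (i+3) - x (i+2)‖ ^ 2 := hsplit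
    _ ≤ _ := by linarith [hbound2 n]
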